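/- Let C be cyclic of order 2^n, n ≥ 2, with involution * induced by a ↦ a^{-1}. Let J* = { z z* : z ∈ V(F_2 C), z z* ∈ F_2 C² } and S_*(C) the group of *-symmetric normalized units. Then J* = S_*(C)², and |J*| = 2^{2^{n-2}-1}. -/

import Mathlib

open MonoidAlgebra Finset

noncomputable section

/-- The cyclic group of order `2^n`, written multiplicatively. -/
abbrev Cgrp (n : ℕ) : Type := Multiplicative (ZMod (2 ^ n))

/-- The group algebra `F₂C` of the cyclic group of order `2^n` over the field of two elements. -/
abbrev FC (n : ℕ) : Type := MonoidAlgebra (ZMod 2) (Cgrp n)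

/-- The augmentation map `χ : F₂C → F₂`. -/
def aug (n : ℕ) : FC n →ₐ[ZMod 2] ZMod 2 :=
  MonoidAlgebra.lift (ZMod 2) (ZMod 2) (Cgrp n) 1

/-- The generator `a` of the cyclic group `C`. -/
def agen (n : ℕ) : Cgrp n := Multiplicative.ofAdd (1 : ZMod (2 ^ n))

/-- The generator `a` viewed inside the group algebra `F₂C`. -/
def A (n : ℕ) : FC n := MonoidAlgebra.of (ZMod 2) (Cgrp n) (agen n)

/-- Group elements of `C` as elements of the group algebra. -/
def Gel (n : ℕ) (i : ZMod (2 ^ n)) : FC n :=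
  MonoidAlgebra.of (ZMod 2) (Cgrp n) (Multiplicative.ofAdd i)

/-- The involution `*` of `F₂C` induced by `a ↦ a⁻¹`. -/
def starOne (n : ℕ) : FC n ≃ₐ[ZMod 2] FC n :=
  MonoidAlgebra.domCongr (ZMod 2) (ZMod 2) (MulEquiv.inv (Cgrp n))

/-- The scalar `2^(n-1) - 1` in `ZMod (2^n)`. -/
def cf (n : ℕ) : ZMod (2 ^ n) := 2 ^ (n - 1) - 1

lemma two_pow_zmod (n : ℕ) : ((2 : ZMod (2 ^ n))) ^ n = 0 := by
  have h : ((2 ^ n : ℕ) : ZMod (2 ^ n)) = 0 := ZMod.natCast_self _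
  push_cast at h
  exact h

lemma cf_sq (n : ℕ) (hn : 2 ≤ n) : cf n * cf n = 1 := by
  have h0 := two_pow_zmod n
  have e1 : (2 : ZMod (2 ^ n)) ^ (n - 1) * 2 ^ (n - 1) = 0 := by
    rw [← pow_add]
    have h : n - 1 + (n - 1) = n + (n - 2) := by omega
    rw [h, pow_add, h0, zero_mul]
  have e2 : (2 : ZMod (2 ^ n)) * 2 ^ (n - 1) = 0 := by
    have h : (2 : ZMod (2 ^ n)) * 2 ^ (n - 1) = 2 ^ (n - 1 + 1) := (pow_succ' 2 (n-1)).symm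
    rw [h]
    have h' : n - 1 + 1 = n := by omega
    rw [h', h0]
  have key : cf n * cf n = 2 ^ (n - 1) * 2 ^ (n - 1) - 2 * 2 ^ (n - 1) + 1 := by
    unfold cf; ring
  rw [key, e1, e2]; ring

/-- The automorphism `z ↦ (2^(n-1)-1)·z` of `ZMod (2^n)`. -/
def thetaAdd (n : ℕ) (hn : 2 ≤ n) : ZMod (2 ^ n) ≃+ ZMod (2 ^ n) where
  toFun z := cf n * z
  invFun z := cf n * z
  left_inv z := by show cf n * (cf n * z) = z; rw [← mul_assoc, cf_sq n hn, one_mul]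
  right_inv z := by show cf n * (cf n * z) = z; rw [← mul_assoc, cf_sq n hn, one_mul]
  map_add' x y := mul_add _ _ _

/-- The automorphism `a ↦ a^(2^(n-1)-1)` of `C`. -/
def theta (n : ℕ) (hn : 2 ≤ n) : Cgrp n ≃* Cgrp n :=
  AddEquiv.toMultiplicative (thetaAdd n hn)

/-- The involution `⊛` of `F₂C` induced by `a ↦ a^(2^(n-1)-1)`. -/
def starTwo (n : ℕ) (hn : 2 ≤ n) : FC n ≃ₐ[ZMod 2] FC n :=
  MonoidAlgebra.domCongr (ZMod 2) (ZMod 2) (theta n hn)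

/-- The group `V(F₂C)` of normalized units, as a subgroup of the unit group of `F₂C`. -/
def Vgrp (n : ℕ) : Subgroup (FC n)ˣ where
  carrier := {u | aug n (↑u : FC n) = 1}
  one_mem' := by simp [Set.mem_setOf_eq]
  mul_mem' := by
    intro u v hu hv
    simp only [Set.mem_setOf_eq, Units.val_mul, map_mul] at *
    rw [hu, hv, one_mul]
  inv_mem' := by
    intro u hu
    simp only [Set.mem_setOf_eq] at *
    have h : aug n ((↑u : FC n) * (↑u⁻¹ : FC n)) = 1 := by
      rw [Units.mul_inv, map_one]
    rw [map_mul, hu, one_mul] at h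
    exact h

/-- The sum `Ĉ` of all elements of `C` inside the group algebra. -/
def hatC (n : ℕ) : FC n := ∑ g : Cgrp n, MonoidAlgebra.of (ZMod 2) (Cgrp n) g

/-- The sum `Ĉ²` of all elements of the subgroup `C²` of squares. -/
def hatCsq (n : ℕ) : FC n :=
  ∑ g ∈ Finset.image (fun h : Cgrp n => h * h) Finset.univ,
    MonoidAlgebra.of (ZMod 2) (Cgrp n) g

/-- The subspace `F₂C²` of `F₂C` spanned by the subgroup of squares. -/
def sqSpan (n : ℕ) : Submodule (ZMod 2) (FC n) :=
  Submodule.span (ZMod 2) (Set.range fun g : Cgrp n => MonoidAlgebra.of (ZMod 2) (Cgrp n) (g * g))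

lemma hatC_mul_hatC (n : ℕ) (hn : 1 ≤ n) : hatC n * hatC n = 0 := by
  classical
  unfold hatC
  rw [Finset.sum_mul_sum]
  have h1 : ∀ g : Cgrp n,
      ∑ h : Cgrp n, MonoidAlgebra.of (ZMod 2) (Cgrp n) g * MonoidAlgebra.of (ZMod 2) (Cgrp n) h
        = hatC n := by
    intro g
    have h2 : ∀ h : Cgrp n,
        MonoidAlgebra.of (ZMod 2) (Cgrp n) g * MonoidAlgebra.of (ZMod 2) (Cgrp n) h
          = MonoidAlgebra.of (ZMod 2) (Cgrp n) (g * h) := by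
      intro h; rw [map_mul]
    unfold hatC
    calc ∑ h : Cgrp n, MonoidAlgebra.of (ZMod 2) (Cgrp n) g * MonoidAlgebra.of (ZMod 2) (Cgrp n) h
        = ∑ h : Cgrp n, MonoidAlgebra.of (ZMod 2) (Cgrp n) (g * h) := by
          exact Finset.sum_congr rfl fun h _ => h2 h
      _ = ∑ h : Cgrp n, MonoidAlgebra.of (ZMod 2) (Cgrp n) h :=
          Fintype.sum_equiv (Equiv.mulLeft g) _ _ (fun h => rfl)
  calc (∑ g : Cgrp n, ∑ h : Cgrp n,
        MonoidAlgebra.of (ZMod 2) (Cgrp n) g * MonoidAlgebra.of (ZMod 2) (Cgrp n) h)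
      = ∑ _g : Cgrp n, hatC n := Finset.sum_congr rfl fun g _ => h1 g
    _ = (Fintype.card (Cgrp n)) • hatC n := by rw [Finset.sum_const, Finset.card_univ]
    _ = 0 := by
        rw [← Nat.cast_smul_eq_nsmul (ZMod 2)]
        have hc : ((Fintype.card (Cgrp n) : ℕ) : ZMod 2) = 0 := by
          have : Fintype.card (Cgrp n) = 2 ^ n := by simp [Cgrp, ZMod.card]
          rw [this]
          push_cast
          rw [show ((2:ZMod 2) = 0) from rfl, zero_pow (by omega)]
        rw [hc, zero_smul]

lemma add_self_FC (n : ℕ) (x : FC n) : x + x = 0 := by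
  rw [← two_smul (ZMod 2) x, show ((2:ZMod 2) = 0) from rfl, zero_smul]

/-- `1 + Ĉ` as a unit of `F₂C` (it is its own inverse). -/
def uC (n : ℕ) (hn : 1 ≤ n) : (FC n)ˣ :=
  ⟨1 + hatC n, 1 + hatC n, by
    have h : (1 + hatC n) * (1 + hatC n) = 1 + (hatC n + hatC n) + hatC n * hatC n := by ring
    rw [h, add_self_FC, hatC_mul_hatC n hn, add_zero, add_zero], by
    have h : (1 + hatC n) * (1 + hatC n) = 1 + (hatC n + hatC n) + hatC n * hatC n := by ring
    rw [h, add_self_FC, hatC_mul_hatC n hn, add_zero, add_zero]⟩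


instance (n : ℕ) : CoeFun (FC n) (fun _ => Cgrp n → ZMod 2) := ⟨fun x => x.coeff⟩

-- val of cast
example (n m : ℕ) (h : m < 2^n) : ((m : ZMod (2^n))).val = m := ZMod.val_cast_of_lt h
example (n : ℕ) (x : ZMod (2^n)) : ((x.val : ℕ) : ZMod (2^n)) = x := ZMod.natCast_rightInverse x
example (n : ℕ) (a b : ZMod (2^n)) : (a+b).val = (a.val + b.val) % 2^n := ZMod.val_add a b
example (n : ℕ) (a : ZMod (2^n)) : (-a).val = if a = 0 then 0 else 2^n - a.val := ZMod.neg_val a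
example (n : ℕ) (a : ZMod (2^n)) : a = 0 ↔ a.val = 0 := (ZMod.val_eq_zero a).symm
example (n m : ℕ) [NeZero n] : ((m:ZMod n) = 0) ↔ n ∣ m := ZMod.natCast_eq_zero_iff m n

lemma Mcast (n : ℕ) : ((2^(n-1) : ℕ) : ZMod (2^n)) = (2^(n-1) : ZMod (2^n)) := by push_cast; ring

lemma M_val (n : ℕ) (hn : 1 ≤ n) : (2^(n-1) : ZMod (2^n)).val = 2^(n-1) := by
  rw [← Mcast]
  exact ZMod.val_cast_of_lt (by
    have := Nat.one_le_two_pow (n := n-1)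
    exact Nat.pow_lt_pow_right (by norm_num) (by omega))

lemma double_zero_iff (n : ℕ) (hn : 1 ≤ n) (x : ZMod (2^n)) :
    x + x = 0 ↔ x = 0 ∨ x = 2^(n-1) := by
  constructor
  · intro h
    have hx : ((x.val + x.val : ℕ) : ZMod (2^n)) = 0 := by
      push_cast
      rw [ZMod.natCast_rightInverse x]; exact h
    rw [ZMod.natCast_eq_zero_iff] at hx
    obtain ⟨c, hc⟩ := hx
    have hv : x.val < 2^n := ZMod.val_lt x
    have h2 : 2^n = 2 * 2^(n-1) := by
      rw [← pow_succ']; congr 1; omega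
    have h3 : x.val + x.val = 2 * (2^(n-1) * c) := by rw [hc, h2]; ring
    have : x.val = 2^(n-1) * c := by omega
    have hc2 : c = 0 ∨ c = 1 := by
      rcases Nat.lt_or_ge c 2 with h | h
      · omega
      · exfalso; nlinarith [Nat.one_le_two_pow (n := n-1)]
    rcases hc2 with rfl | rfl
    · left
      have : x.val = 0 := by omega
      rw [← ZMod.natCast_rightInverse x, this]; simp
    · right
      rw [← ZMod.natCast_rightInverse x, ← Mcast n]
      congr 1; omega
  · rintro (rfl | rfl)
    · simp
    · have : (2:ZMod (2^n))^(n-1) + 2^(n-1) = 2^n := by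
        rw [← two_mul, ← pow_succ']; congr 1; omega
      rw [this]
      have h : ((2 ^ n : ℕ) : ZMod (2 ^ n)) = 0 := ZMod.natCast_self _
      push_cast at h
      exact h

lemma even_val_double (n : ℕ) (hn : 1 ≤ n) (j : ZMod (2^n)) : Even ((j+j).val) := by
  rw [ZMod.val_add]
  have h2 : (2:ℕ) ∣ 2^n := dvd_pow_self 2 (by omega)
  have := (Nat.dvd_mod_iff h2).mpr (⟨j.val, by ring⟩ : (2:ℕ) ∣ (j.val + j.val))
  exact (even_iff_two_dvd).mpr this
namespace StarAux

instance instCharPFC (n : ℕ) : CharP (FC n) 2 :=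
  charP_of_injective_algebraMap' (ZMod 2) 2

lemma star_apply (n : ℕ) (x : FC n) (k : Cgrp n) : starOne n x k = x k⁻¹ := by
  simp [starOne]

lemma star_star (n : ℕ) (x : FC n) : starOne n (starOne n x) = x := by
  ext k; rw [star_apply, star_apply, inv_inv]

lemma aug_eq_sum (n : ℕ) (x : FC n) : aug n x = ∑ g : Cgrp n, x g := by
  rw [aug, MonoidAlgebra.lift_apply, Finsupp.sum_fintype] <;> simp

/-- the element t = a^(2^(n-1)) of order 2 -/
def tM (n : ℕ) : Cgrp n := Multiplicative.ofAdd (2^(n-1) : ZMod (2^n))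

lemma tM_ne_one (n : ℕ) (hn : 1 ≤ n) : tM n ≠ 1 := by
  simp only [tM, ne_eq]
  intro h
  have h2 : (2^(n-1) : ZMod (2^n)) = 0 := by
    have := congrArg Multiplicative.toAdd h; simpa using this
  have h3 := congrArg ZMod.val h2
  rw [M_val n hn, ZMod.val_zero] at h3
  exact absurd h3 (by positivity)

lemma M_add_M (n : ℕ) (hn : 1 ≤ n) : (2^(n-1) : ZMod (2^n)) + 2^(n-1) = 0 := by
  have h : (2:ZMod (2^n))^(n-1) + 2^(n-1) = 2^n := by
    rw [← two_mul, ← pow_succ']; congr 1; omega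
  rw [h]
  have h2 : ((2 ^ n : ℕ) : ZMod (2 ^ n)) = 0 := ZMod.natCast_self _
  push_cast at h2
  exact h2

lemma tM_mul_tM (n : ℕ) (hn : 1 ≤ n) : tM n * tM n = 1 := by
  rw [tM, ← ofAdd_add, M_add_M n hn, ofAdd_zero]

lemma tM_inv (n : ℕ) (hn : 1 ≤ n) : (tM n)⁻¹ = tM n :=
  inv_eq_of_mul_eq_one_right (tM_mul_tM n hn)

lemma self_inv_iff (n : ℕ) (hn : 1 ≤ n) (a : Cgrp n) :
    a⁻¹ = a ↔ a = 1 ∨ a = tM n := by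
  constructor
  · intro h
    have h2 : Multiplicative.toAdd a + Multiplicative.toAdd a = 0 := by
      have := congrArg Multiplicative.toAdd (mul_inv_cancel a)
      rw [h] at this; simpa using this
    rcases (double_zero_iff n hn _).mp h2 with h3 | h3
    · left
      have := congrArg Multiplicative.ofAdd h3; simpa using this
    · right
      have := congrArg Multiplicative.ofAdd h3; simpa [tM] using this
  · rintro (rfl | rfl)
    · simp
    · exact tM_inv n hn

lemma x_eq_sum_single (n : ℕ) (x : FC n) :
    x = ∑ g ∈ x.coeff.support, MonoidAlgebra.single g (x g) := by
  conv_lhs => rw [← MonoidAlgebra.sum_coeff_single x]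
  rfl

lemma sq_expand (n : ℕ) (x : FC n) :
    x * x = ∑ g ∈ x.coeff.support, MonoidAlgebra.single (g * g) (x g) := by
  have h : x * x = (∑ g ∈ x.coeff.support, MonoidAlgebra.single g (x g)) ^ 2 := by
    rw [← x_eq_sum_single n x, sq]
  rw [h, sum_pow_char]
  refine Finset.sum_congr rfl fun g hg => ?_
  rw [MonoidAlgebra.single_pow, pow_two, ZMod.pow_card]

lemma sq_apply (n : ℕ) (x : FC n) (k : Cgrp n) :
    (x * x) k = ∑ g : Cgrp n, (if g * g = k then x g else 0) := by
  rw [sq_expand]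
  rw [MonoidAlgebra.coeff_sum, Finsupp.finset_sum_apply]
  rw [Finset.sum_subset (Finset.subset_univ x.coeff.support) (fun g _ hg => by
    rw [Finsupp.notMem_support_iff.mp hg]; simp)]
  exact Finset.sum_congr rfl fun g _ => Finsupp.single_apply

lemma sq_coeff_even (n : ℕ) (hn : 1 ≤ n) (x : FC n) (j : ZMod (2^n)) :
    (x * x) (Multiplicative.ofAdd (j + j))
      = x (Multiplicative.ofAdd j) + x (Multiplicative.ofAdd (j + 2^(n-1))) := by
  rw [sq_apply]
  have hne : (Multiplicative.ofAdd j : Cgrp n) ≠ Multiplicative.ofAdd (j + 2^(n-1)) := by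
    intro h
    have h2 : j = j + 2^(n-1) := by simpa using h
    have h3 : (2^(n-1) : ZMod (2^n)) = 0 := by linear_combination -h2
    have h4 := congrArg ZMod.val h3
    rw [M_val n hn, ZMod.val_zero] at h4
    exact absurd h4 (by positivity)
  rw [← Finset.sum_subset
    (Finset.subset_univ ({Multiplicative.ofAdd j, Multiplicative.ofAdd (j + 2^(n-1))}
      : Finset (Cgrp n)))
    (fun g _ hg => by
      rw [if_neg]
      intro h
      simp only [Finset.mem_insert, Finset.mem_singleton] at hg
      push_neg at hg
      have h2 : Multiplicative.toAdd g + Multiplicative.toAdd g = j + j := by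
        have := congrArg Multiplicative.toAdd h; simpa using this
      have h3 : (Multiplicative.toAdd g - j) + (Multiplicative.toAdd g - j) = 0 := by
        linear_combination h2
      rcases (double_zero_iff n hn _).mp h3 with h4 | h4
      · exact hg.1 (by
          have : Multiplicative.toAdd g = j := by linear_combination h4
          have := congrArg Multiplicative.ofAdd this; simpa using this)
      · exact hg.2 (by
          have : Multiplicative.toAdd g = j + 2^(n-1) := by linear_combination h4
          have := congrArg Multiplicative.ofAdd this; simpa using this))]
  rw [Finset.sum_pair hne]
  rw [if_pos (by rw [← ofAdd_add]), if_pos (by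
    rw [← ofAdd_add]
    congr 1
    have := M_add_M n hn
    have h5 : j + 2^(n-1) + (j + 2^(n-1)) = j + j + (2^(n-1) + 2^(n-1)) := by ring
    rw [h5, this, add_zero])]

lemma sq_coeff_odd (n : ℕ) (hn : 1 ≤ n) (x : FC n) (k : Cgrp n)
    (hk : Odd (Multiplicative.toAdd k).val) : (x * x) k = 0 := by
  rw [sq_apply]
  refine Finset.sum_eq_zero fun g _ => ?_
  rw [if_neg]
  intro h
  have h2 : Even ((Multiplicative.toAdd k).val) := by
    have h3 : Multiplicative.toAdd g + Multiplicative.toAdd g = Multiplicative.toAdd k := by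
      have := congrArg Multiplicative.toAdd h; simpa using this
    rw [← h3]
    exact even_val_double n hn _
  exact (Nat.not_odd_iff_even.mpr h2) hk

end StarAux
namespace StarAux

lemma pow_card (n : ℕ) (x : FC n) :
    x ^ (2^n) = MonoidAlgebra.single 1 (aug n x) := by
  conv_lhs => rw [x_eq_sum_single n x]
  rw [sum_pow_char_pow]
  have hterm : ∀ g ∈ x.coeff.support, (MonoidAlgebra.single g (x g) : FC n) ^ (2^n)
      = MonoidAlgebra.single 1 (x g) := by
    intro g hg
    rw [MonoidAlgebra.single_pow, ZMod.pow_card_pow]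
    congr 1
    have h : Multiplicative.toAdd (g ^ (2^n)) = 0 := by
      rw [toAdd_pow, nsmul_eq_mul]
      have h2 : ((2 ^ n : ℕ) : ZMod (2 ^ n)) = 0 := ZMod.natCast_self _
      rw [h2, zero_mul]
    calc g ^ 2^n = Multiplicative.ofAdd (Multiplicative.toAdd (g ^ 2^n)) := rfl
      _ = Multiplicative.ofAdd 0 := by rw [h]
      _ = 1 := rfl
  rw [Finset.sum_congr rfl hterm]
  have hss : ∑ g ∈ x.coeff.support, (MonoidAlgebra.single 1 (x g) : FC n)
      = MonoidAlgebra.single 1 (∑ g ∈ x.coeff.support, x g) := by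
    have h5 := map_sum (MonoidAlgebra.singleAddHom (1 : Cgrp n) : ZMod 2 →+ FC n)
      (fun g => x g) x.coeff.support
    exact h5.symm
  rw [hss]
  congr 1
  rw [aug_eq_sum]
  exact Finset.sum_subset (Finset.subset_univ _)
    (fun g _ hg => Finsupp.notMem_support_iff.mp hg)

lemma isUnit_of_aug (n : ℕ) (x : FC n) (hx : aug n x = 1) : IsUnit x := by
  have hnil : IsNilpotent (x + 1) := ⟨2^n, by
    rw [pow_card]
    have h : aug n (x + 1) = 0 := by rw [map_add, hx, map_one]; decide
    rw [h]; simp⟩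
  have h2 := hnil.isUnit_one_add
  have h3 : 1 + (x + 1) = x := by
    rw [add_comm 1 (x+1), add_assoc, add_self_FC n 1, add_zero]
  rwa [h3] at h2

lemma sum_symm (n : ℕ) (hn : 1 ≤ n) (x : FC n) (hsym : ∀ k, x k⁻¹ = x k) :
    ∑ g : Cgrp n, x g = x 1 + x (tM n) := by
  have hsub : ({1, tM n} : Finset (Cgrp n)) ⊆ Finset.univ := Finset.subset_univ _
  rw [← Finset.sum_sdiff hsub]
  have h0 : ∑ g ∈ Finset.univ \ {1, tM n}, x g = 0 := by
    refine Finset.sum_involution (fun a _ => a⁻¹) ?_ ?_ ?_ ?_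
    · intro a ha
      rw [hsym]
      exact CharTwo.add_self_eq_zero _
    · intro a ha _
      intro h
      rcases (self_inv_iff n hn a).mp h with h2 | h2 <;>
        simp [h2] at ha
    · intro a ha
      simp only [Finset.mem_sdiff, Finset.mem_univ, Finset.mem_insert,
        Finset.mem_singleton, true_and, not_or] at ha ⊢
      exact ⟨fun h => ha.1 (by rw [← inv_inv a, h, inv_one]),
        fun h => ha.2 (by rw [← inv_inv a, h, tM_inv n hn])⟩
    · intro a ha; exact inv_inv a
  rw [h0, zero_add, Finset.sum_pair (Ne.symm (tM_ne_one n hn))]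

lemma zzstar_t (n : ℕ) (hn : 1 ≤ n) (z : FC n) : (z * starOne n z) (tM n) = 0 := by
  rw [MonoidAlgebra.mul_apply_left]
  rw [Finsupp.sum_fintype _ _ (by intro a; rw [zero_mul])]
  have hterm : ∀ a ∈ (Finset.univ : Finset (Cgrp n)),
      z a * starOne n z (a⁻¹ * tM n) = z a * z (tM n * a) := by
    intro a _
    rw [star_apply]
    congr 2
    rw [mul_inv_rev, inv_inv, tM_inv n hn]
  rw [Finset.sum_congr rfl hterm]
  refine Finset.sum_involution (fun a _ => tM n * a) ?_ ?_ ?_ ?_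
  · intro a _
    have h : tM n * (tM n * a) = a := by rw [← mul_assoc, tM_mul_tM n hn, one_mul]
    rw [h, mul_comm (z (tM n * a)) (z a)]
    exact CharTwo.add_self_eq_zero _
  · intro a _ _
    intro h
    apply tM_ne_one n hn
    have h2 : tM n * a = 1 * a := by rw [h, one_mul]
    exact mul_right_cancel h2
  · intro a _; exact Finset.mem_univ _
  · intro a _
    rw [← mul_assoc, tM_mul_tM n hn, one_mul]

def oddKer (n : ℕ) : Submodule (ZMod 2) (FC n) where
  carrier := {y : FC n | ∀ k : Cgrp n, Odd (Multiplicative.toAdd k).val → y k = 0}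
  add_mem' := by
    intro a b ha hb k hk
    show (a + b) k = 0
    rw [MonoidAlgebra.coeff_add, Finsupp.add_apply, ha k hk, hb k hk, add_zero]
  zero_mem' := by intro k hk; rfl
  smul_mem' := by
    intro c x hx k hk
    show (c • x) k = 0
    rw [MonoidAlgebra.coeff_smul, Finsupp.smul_apply, hx k hk, smul_zero]

lemma mem_sqSpan_iff (n : ℕ) (hn : 1 ≤ n) (y : FC n) :
    y ∈ sqSpan n ↔ ∀ k : Cgrp n, Odd (Multiplicative.toAdd k).val → y k = 0 := by
  constructor
  · intro hy
    have hle : sqSpan n ≤ oddKer n := by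
      rw [sqSpan, Submodule.span_le]
      rintro _ ⟨g, rfl⟩ k hk
      show (MonoidAlgebra.of (ZMod 2) (Cgrp n) (g * g)) k = 0
      rw [MonoidAlgebra.of_apply, MonoidAlgebra.coeff_single, Finsupp.single_apply, if_neg]
      intro h
      have h2 : Even ((Multiplicative.toAdd k).val) := by
        have h3 : Multiplicative.toAdd g + Multiplicative.toAdd g
            = Multiplicative.toAdd k := by
          have := congrArg Multiplicative.toAdd h; simpa using this
        rw [← h3]
        exact even_val_double n hn _
      exact (Nat.not_odd_iff_even.mpr h2) hk
    exact hle hy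
  · intro hodd
    rw [x_eq_sum_single n y]
    apply Submodule.sum_mem
    intro g hg
    have hev : Even ((Multiplicative.toAdd g).val) := by
      by_contra h
      exact (Finsupp.mem_support_iff.mp hg) (hodd g (Nat.not_even_iff_odd.mp h))
    obtain ⟨m, hm⟩ := hev
    have hgj : (Multiplicative.ofAdd (m : ZMod (2^n)))
        * (Multiplicative.ofAdd (m : ZMod (2^n))) = g := by
      rw [← ofAdd_add]
      have h2 : ((m + m : ℕ) : ZMod (2^n)) = Multiplicative.toAdd g := by
        rw [← hm, ZMod.natCast_rightInverse]
      push_cast at h2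
      rw [h2]
      simp
    have h3 : (MonoidAlgebra.single g (y g) : FC n)
        = y g • (MonoidAlgebra.of (ZMod 2) (Cgrp n)
            (Multiplicative.ofAdd (m : ZMod (2^n)) * Multiplicative.ofAdd (m : ZMod (2^n)))) := by
      rw [hgj, MonoidAlgebra.of_apply, MonoidAlgebra.smul_single, smul_eq_mul, mul_one]
    rw [h3]
    exact Submodule.smul_mem _ _ (Submodule.subset_span
      ⟨Multiplicative.ofAdd (m : ZMod (2^n)), rfl⟩)

end StarAux
namespace StarAux

def Eset (n : ℕ) : Set (FC n) :=
  {y : FC n | (∀ k : Cgrp n, Odd (Multiplicative.toAdd k).val → y k = 0)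
    ∧ (∀ k : Cgrp n, y k⁻¹ = y k) ∧ y (tM n) = 0 ∧ y 1 = 1}

def sConstr (n : ℕ) (y : FC n) : FC n :=
  MonoidAlgebra.ofCoeff (Finsupp.equivFunOnFinite.symm (fun k : Cgrp n =>
    if (Multiplicative.toAdd k).val ≤ 2^(n-2) ∨ 3 * 2^(n-2) ≤ (Multiplicative.toAdd k).val
    then y (k * k) else 0))

lemma sConstr_apply (n : ℕ) (y : FC n) (k : Cgrp n) :
    sConstr n y k =
      if (Multiplicative.toAdd k).val ≤ 2^(n-2) ∨ 3 * 2^(n-2) ≤ (Multiplicative.toAdd k).val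
      then y (k * k) else 0 := rfl

lemma pow_facts (n : ℕ) (hn : 2 ≤ n) :
    2^n = 4 * 2^(n-2) ∧ 2^(n-1) = 2 * 2^(n-2) ∧ 1 ≤ 2^(n-2) := by
  refine ⟨?_, ?_, Nat.one_le_two_pow⟩
  · calc 2^n = 2^((n-2)+2) := by congr 1; omega
      _ = 4 * 2^(n-2) := by rw [pow_add]; ring
  · calc 2^(n-1) = 2^((n-2)+1) := by congr 1; omega
      _ = 2 * 2^(n-2) := by rw [pow_add]; ring

lemma toAdd_inv (n : ℕ) (k : Cgrp n) :
    Multiplicative.toAdd k⁻¹ = -(Multiplicative.toAdd k) := rfl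

lemma val_ne_zero_of_ne_one (n : ℕ) (k : Cgrp n) (h : k ≠ 1) :
    (Multiplicative.toAdd k).val ≠ 0 := by
  intro h2
  apply h
  have h3 : Multiplicative.toAdd k = 0 := (ZMod.val_eq_zero _).mp h2
  calc k = Multiplicative.ofAdd (Multiplicative.toAdd k) := rfl
    _ = Multiplicative.ofAdd 0 := by rw [h3]
    _ = 1 := rfl

lemma sConstr_symm (n : ℕ) (hn : 2 ≤ n) (y : FC n) (hsym : ∀ k, y k⁻¹ = y k) :
    ∀ k, sConstr n y k⁻¹ = sConstr n y k := by
  obtain ⟨h4, h2, hQ⟩ := pow_facts n hn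
  intro k
  rw [sConstr_apply, sConstr_apply]
  have hv : y (k⁻¹ * k⁻¹) = y (k * k) := by rw [← mul_inv, hsym]
  by_cases h1 : k = 1
  · subst h1; rw [inv_one]
  · have hcond : ((Multiplicative.toAdd k⁻¹).val ≤ 2^(n-2)
        ∨ 3 * 2^(n-2) ≤ (Multiplicative.toAdd k⁻¹).val)
      ↔ ((Multiplicative.toAdd k).val ≤ 2^(n-2)
        ∨ 3 * 2^(n-2) ≤ (Multiplicative.toAdd k).val) := by
      rw [toAdd_inv, ZMod.neg_val, if_neg (by
        intro h0
        exact val_ne_zero_of_ne_one n k h1 ((ZMod.val_eq_zero _).mpr h0))]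
      have hlt : (Multiplicative.toAdd k).val < 2^n := ZMod.val_lt _
      have hne := val_ne_zero_of_ne_one n k h1
      omega
    rw [if_congr hcond hv rfl]

lemma sConstr_one (n : ℕ) (y : FC n) : sConstr n y 1 = y 1 := by
  rw [sConstr_apply, if_pos, one_mul]
  left
  show (Multiplicative.toAdd (1 : Cgrp n)).val ≤ 2^(n-2)
  rw [toAdd_one, ZMod.val_zero]
  exact Nat.zero_le _

lemma sConstr_tM (n : ℕ) (hn : 2 ≤ n) (y : FC n) : sConstr n y (tM n) = 0 := by
  obtain ⟨h4, h2, hQ⟩ := pow_facts n hn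
  rw [sConstr_apply, if_neg]
  show ¬((Multiplicative.toAdd (tM n)).val ≤ 2^(n-2)
    ∨ 3 * 2^(n-2) ≤ (Multiplicative.toAdd (tM n)).val)
  have hval : (Multiplicative.toAdd (tM n)).val = 2^(n-1) := M_val n (by omega)
  omega

lemma sConstr_aug (n : ℕ) (hn : 2 ≤ n) (y : FC n) (hsym : ∀ k, y k⁻¹ = y k)
    (h1 : y 1 = 1) : aug n (sConstr n y) = 1 := by
  rw [aug_eq_sum, sum_symm n (by omega) _ (sConstr_symm n hn y hsym),
    sConstr_one, sConstr_tM n hn, h1, add_zero]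

lemma sConstr_sq (n : ℕ) (hn : 2 ≤ n) (y : FC n) (hy : y ∈ Eset n) :
    sConstr n y * sConstr n y = y := by
  obtain ⟨hodd, hsym, hM0, h1⟩ := hy
  obtain ⟨h4, h2, hQ⟩ := pow_facts n hn
  ext k
  rcases Nat.even_or_odd (Multiplicative.toAdd k).val with hev | hodd'
  · obtain ⟨m, hm⟩ := hev
    have hmlt : m + m < 2^n := hm ▸ ZMod.val_lt _
    have hk : k = Multiplicative.ofAdd ((m : ZMod (2^n)) + (m : ZMod (2^n))) := by
      have h5 : ((m + m : ℕ) : ZMod (2^n)) = Multiplicative.toAdd k := by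
        rw [← hm, ZMod.natCast_rightInverse]
      push_cast at h5
      calc k = Multiplicative.ofAdd (Multiplicative.toAdd k) := rfl
        _ = _ := by rw [← h5]
    rw [hk, sq_coeff_even n (by omega)]
    rw [sConstr_apply, sConstr_apply]
    have hv1 : (Multiplicative.toAdd (Multiplicative.ofAdd (m : ZMod (2^n)))).val = m := by
      rw [toAdd_ofAdd]; exact ZMod.val_cast_of_lt (by omega)
    have hv2 : (Multiplicative.toAdd (Multiplicative.ofAdd
        ((m : ZMod (2^n)) + 2^(n-1)))).val = m + 2^(n-1) := by
      rw [toAdd_ofAdd, ZMod.val_add, ZMod.val_cast_of_lt (show m < 2^n by omega),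
        M_val n (by omega), Nat.mod_eq_of_lt (by omega)]
    have hsq1 : (Multiplicative.ofAdd (m : ZMod (2^n)))
        * (Multiplicative.ofAdd (m : ZMod (2^n)))
        = Multiplicative.ofAdd ((m : ZMod (2^n)) + (m : ZMod (2^n))) := by
      rw [← ofAdd_add]
    have hsq2 : (Multiplicative.ofAdd ((m : ZMod (2^n)) + 2^(n-1)))
        * (Multiplicative.ofAdd ((m : ZMod (2^n)) + 2^(n-1)))
        = Multiplicative.ofAdd ((m : ZMod (2^n)) + (m : ZMod (2^n))) := by
      rw [← ofAdd_add]
      congr 1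
      have h6 := M_add_M n (by omega)
      linear_combination h6
    rcases lt_trichotomy m (2^(n-2)) with hc | hc | hc
    · rw [if_pos (by omega), if_neg (by omega), hsq1, add_zero]
    · -- m = Q : both branches on, but y value is y (tM) = 0
      have hkt : Multiplicative.ofAdd ((m : ZMod (2^n)) + (m : ZMod (2^n))) = tM n := by
        show _ = Multiplicative.ofAdd (2^(n-1) : ZMod (2^n))
        congr 1
        have : ((m + m : ℕ) : ZMod (2^n)) = ((2^(n-1) : ℕ) : ZMod (2^n)) := by
          congr 1; omega
        push_cast at this
        linear_combination this
      rw [if_pos (by omega), if_pos (by omega), hsq1, hsq2, hkt, hM0, add_zero]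
    · have hm2 : m < 2^(n-1) := by omega
      rw [if_neg (by omega), if_pos (by omega), hsq2, zero_add]
  · rw [sq_coeff_odd n (by omega) _ _ hodd', hodd k hodd']

lemma lhs_subset_E (n : ℕ) (hn : 2 ≤ n) :
    {y : FC n | (∃ z : (FC n)ˣ, aug n (↑z : FC n) = 1 ∧ y = (↑z : FC n) * starOne n ↑z)
        ∧ y ∈ sqSpan n} ⊆ Eset n := by
  rintro y ⟨⟨z, hz, rfl⟩, hsq⟩
  have hodd := (mem_sqSpan_iff n (by omega) _).mp hsq
  have hstar : starOne n ((↑z : FC n) * starOne n ↑z) = (↑z : FC n) * starOne n ↑z := by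
    rw [map_mul, star_star, mul_comm]
  have hsym : ∀ k, ((↑z : FC n) * starOne n ↑z) k⁻¹ = ((↑z : FC n) * starOne n ↑z) k := by
    intro k
    conv_rhs => rw [← hstar, star_apply]
  have ht := zzstar_t n (by omega) (↑z : FC n)
  have haugstar : aug n (starOne n (↑z : FC n)) = aug n (↑z : FC n) := by
    rw [aug_eq_sum, aug_eq_sum]
    exact Fintype.sum_equiv (Equiv.inv (Cgrp n)) _ _ (fun g => star_apply n _ g)
  have haug : aug n ((↑z : FC n) * starOne n ↑z) = 1 := by
    rw [map_mul, hz, haugstar, hz, one_mul]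
  have h1 : ((↑z : FC n) * starOne n ↑z) 1 = 1 := by
    have hs := sum_symm n (by omega) _ hsym
    rw [← aug_eq_sum, haug, ht, add_zero] at hs
    exact hs.symm
  exact ⟨hodd, hsym, ht, h1⟩

lemma E_subset_rhs (n : ℕ) (hn : 2 ≤ n) :
    Eset n ⊆ {y : FC n | ∃ s : (FC n)ˣ, aug n (↑s : FC n) = 1 ∧ starOne n (↑s : FC n) = ↑s ∧
        y = (↑s : FC n) * ↑s} := by
  intro y hy
  obtain ⟨hodd, hsym, hM0, h1⟩ := hy
  have haug := sConstr_aug n hn y hsym h1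
  have hu := isUnit_of_aug n _ haug
  refine ⟨hu.unit, ?_, ?_, ?_⟩
  · rw [IsUnit.unit_spec]; exact haug
  · rw [IsUnit.unit_spec]
    ext k
    rw [star_apply]
    exact sConstr_symm n hn y hsym k
  · rw [IsUnit.unit_spec]
    exact (sConstr_sq n hn y ⟨hodd, hsym, hM0, h1⟩).symm

lemma rhs_subset_lhs (n : ℕ) (hn : 2 ≤ n) :
    {y : FC n | ∃ s : (FC n)ˣ, aug n (↑s : FC n) = 1 ∧ starOne n (↑s : FC n) = ↑s ∧
        y = (↑s : FC n) * ↑s}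
      ⊆ {y : FC n | (∃ z : (FC n)ˣ, aug n (↑z : FC n) = 1
          ∧ y = (↑z : FC n) * starOne n ↑z) ∧ y ∈ sqSpan n} := by
  rintro y ⟨s, hs, hstar, rfl⟩
  refine ⟨⟨s, hs, by rw [hstar]⟩, ?_⟩
  rw [mem_sqSpan_iff n (by omega)]
  intro k hk
  exact sq_coeff_odd n (by omega) _ k hk

end StarAux
namespace StarAux

def wfun (n : ℕ) (v : Fin (2^(n-2) - 1) → ZMod 2) (r : ℕ) : ZMod 2 :=
  if r = 0 then 1 else if r % 2 = 1 then 0 else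
    if h : 1 ≤ min (r/2) (2^(n-1) - r/2) ∧ min (r/2) (2^(n-1) - r/2) ≤ 2^(n-2) - 1
    then v ⟨min (r/2) (2^(n-1) - r/2) - 1, by omega⟩ else 0

def psi (n : ℕ) (v : Fin (2^(n-2) - 1) → ZMod 2) : FC n :=
  MonoidAlgebra.ofCoeff (Finsupp.equivFunOnFinite.symm (fun k : Cgrp n => wfun n v (Multiplicative.toAdd k).val))

lemma psi_apply (n : ℕ) (v : Fin (2^(n-2) - 1) → ZMod 2) (k : Cgrp n) :
    psi n v k = wfun n v (Multiplicative.toAdd k).val := rfl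

def phi (n : ℕ) (y : FC n) (i : Fin (2^(n-2) - 1)) : ZMod 2 :=
  y (Multiplicative.ofAdd ((2 * (i.val + 1) : ℕ) : ZMod (2^n)))

lemma wfun_neg (n : ℕ) (hn : 2 ≤ n) (v : Fin (2^(n-2) - 1) → ZMod 2) (r : ℕ)
    (hr1 : 1 ≤ r) (hr2 : r < 2^n) : wfun n v (2^n - r) = wfun n v r := by
  obtain ⟨h4, h2, hQ⟩ := pow_facts n hn
  have e0 : ¬(2^n - r = 0) := by omega
  have e1 : ¬(r = 0) := by omega
  unfold wfun
  rw [if_neg e0, if_neg e1]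
  by_cases hpar : r % 2 = 1
  · have e2 : (2^n - r) % 2 = 1 := by omega
    rw [if_pos e2, if_pos hpar]
  · have e2 : ¬((2^n - r) % 2 = 1) := by omega
    rw [if_neg e2, if_neg hpar]
    have hA : (2^n - r)/2 = 2^(n-1) - r/2 := by omega
    have hC : 2^(n-1) - (2^(n-1) - r/2) = r/2 := by omega
    simp only [hA, hC, Nat.min_comm (2^(n-1) - r/2) (r/2)]

lemma psi_mem (n : ℕ) (hn : 2 ≤ n) (v : Fin (2^(n-2) - 1) → ZMod 2) :
    psi n v ∈ Eset n := by
  obtain ⟨h4, h2, hQ⟩ := pow_facts n hn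
  refine ⟨?_, ?_, ?_, ?_⟩
  · intro k hk
    rw [psi_apply]
    have hk' := Nat.odd_iff.mp hk
    have e1 : ¬((Multiplicative.toAdd k).val = 0) := by omega
    unfold wfun
    rw [if_neg e1, if_pos hk']
  · intro k
    rw [psi_apply, psi_apply, toAdd_inv, ZMod.neg_val]
    split_ifs with h0
    · rw [h0, ZMod.val_zero]
    · have hlt : (Multiplicative.toAdd k).val < 2^n := ZMod.val_lt _
      have hne : (Multiplicative.toAdd k).val ≠ 0 := fun h =>
        h0 ((ZMod.val_eq_zero (Multiplicative.toAdd k)).mp h)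
      exact wfun_neg n hn v _ (by omega) hlt
  · rw [psi_apply]
    show wfun n v (Multiplicative.toAdd (tM n)).val = 0
    rw [show (Multiplicative.toAdd (tM n)).val = 2^(n-1) from M_val n (by omega)]
    have e1 : ¬(2^(n-1) = 0) := by omega
    have e2 : ¬(2^(n-1) % 2 = 1) := by omega
    have e3 : ¬(1 ≤ min (2^(n-1)/2) (2^(n-1) - 2^(n-1)/2)
        ∧ min (2^(n-1)/2) (2^(n-1) - 2^(n-1)/2) ≤ 2^(n-2) - 1) := by omega
    unfold wfun
    rw [if_neg e1, if_neg e2, dif_neg e3]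
  · rw [psi_apply]
    show wfun n v (Multiplicative.toAdd (1 : Cgrp n)).val = 1
    rw [toAdd_one, ZMod.val_zero]
    unfold wfun
    rw [if_pos rfl]

lemma phi_psi (n : ℕ) (hn : 2 ≤ n) (v : Fin (2^(n-2) - 1) → ZMod 2) :
    phi n (psi n v) = v := by
  obtain ⟨h4, h2, hQ⟩ := pow_facts n hn
  funext i
  have hi := i.isLt
  rw [phi, psi_apply, toAdd_ofAdd, ZMod.val_cast_of_lt (by omega)]
  have e1 : ¬(2 * (i.val + 1) = 0) := by omega
  have e2 : ¬(2 * (i.val + 1) % 2 = 1) := by omega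
  unfold wfun
  rw [if_neg e1, if_neg e2]
  rw [dif_pos (show 1 ≤ min ((2 * (i.val + 1))/2) (2^(n-1) - (2 * (i.val + 1))/2)
      ∧ min ((2 * (i.val + 1))/2) (2^(n-1) - (2 * (i.val + 1))/2) ≤ 2^(n-2) - 1 by omega)]
  have hidx : min ((2 * (i.val + 1))/2) (2^(n-1) - (2 * (i.val + 1))/2) - 1 = i.val := by
    omega
  exact congrArg v (Fin.ext hidx)

lemma psi_phi (n : ℕ) (hn : 2 ≤ n) (y : FC n) (hy : y ∈ Eset n) :
    psi n (phi n y) = y := by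
  obtain ⟨hodd, hsym, hM0, h1⟩ := hy
  obtain ⟨h4, h2, hQ⟩ := pow_facts n hn
  ext k
  rw [psi_apply]
  have hlt : (Multiplicative.toAdd k).val < 2^n := ZMod.val_lt _
  unfold wfun
  by_cases h0 : (Multiplicative.toAdd k).val = 0
  · rw [if_pos h0]
    have hk1 : k = 1 := by
      by_contra hne
      exact val_ne_zero_of_ne_one n k hne h0
    rw [hk1, h1]
  · rw [if_neg h0]
    by_cases hpar : (Multiplicative.toAdd k).val % 2 = 1
    · rw [if_pos hpar, hodd k (Nat.odd_iff.mpr hpar)]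
    · rw [if_neg hpar]
      set r := (Multiplicative.toAdd k).val with hr
      by_cases hc : 1 ≤ min (r/2) (2^(n-1) - r/2) ∧ min (r/2) (2^(n-1) - r/2) ≤ 2^(n-2) - 1
      · rw [dif_pos hc]
        show y (Multiplicative.ofAdd
          ((2 * ((min (r/2) (2^(n-1) - r/2) - 1) + 1) : ℕ) : ZMod (2^n))) = y k
        have hm1 : (min (r/2) (2^(n-1) - r/2) - 1) + 1 = min (r/2) (2^(n-1) - r/2) := by
          omega
        rw [hm1]
        rcases Nat.le_total (r/2) (2^(n-1) - r/2) with hle | hle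
        · rw [min_eq_left hle]
          have hv : ((2 * (r/2) : ℕ) : ZMod (2^n)) = Multiplicative.toAdd k := by
            rw [show 2 * (r/2) = r by omega, hr]
            exact ZMod.natCast_rightInverse _
          rw [hv, ofAdd_toAdd]
        · rw [min_eq_right hle]
          have hv : ((2 * (2^(n-1) - r/2) : ℕ) : ZMod (2^n))
              = -(Multiplicative.toAdd k) := by
            rw [show 2 * (2^(n-1) - r/2) = 2^n - r by omega]
            rw [Nat.cast_sub (le_of_lt hlt)]
            rw [ZMod.natCast_self, zero_sub, hr, ZMod.natCast_rightInverse]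
          rw [hv]
          exact hsym k
      · rw [dif_neg hc]
        have hm : r = 2^(n-1) := by omega
        have hk : k = tM n := by
          have h3 : Multiplicative.toAdd k = (2^(n-1) : ZMod (2^n)) := by
            rw [← Mcast n]
            have := (ZMod.natCast_rightInverse (Multiplicative.toAdd k)).symm
            rw [this, ← hr, hm]
          calc k = Multiplicative.ofAdd (Multiplicative.toAdd k) := rfl
            _ = tM n := by rw [h3]; rfl
        rw [hk, hM0]

def Ephi (n : ℕ) (hn : 2 ≤ n) : Eset n ≃ (Fin (2^(n-2) - 1) → ZMod 2) where
  toFun y := phi n y.1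
  invFun v := ⟨psi n v, psi_mem n hn v⟩
  left_inv := fun ⟨y, hy⟩ => Subtype.ext (psi_phi n hn y hy)
  right_inv := fun v => phi_psi n hn v

lemma card_Eset (n : ℕ) (hn : 2 ≤ n) : Nat.card (Eset n) = 2 ^ (2^(n-2) - 1) := by
  rw [Nat.card_congr (Ephi n hn), Nat.card_fun, Nat.card_zmod, Nat.card_eq_fintype_card,
    Fintype.card_fin]

end StarAux

/-- For `C` cyclic of order `2^n`, `n ≥ 2`, with involution `*`:
`J* = { z z* : z ∈ V(F₂C), z z* ∈ F₂C² }` equals the group of squares of the group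
`S_*(C)` of `*`-symmetric normalized units, and `|J*| = 2^(2^(n-2)-1)`. -/
theorem stmt17 (n : ℕ) (hn : 2 ≤ n) :
    {y : FC n | (∃ z : (FC n)ˣ, aug n (↑z : FC n) = 1 ∧ y = (↑z : FC n) * starOne n ↑z)
        ∧ y ∈ sqSpan n}
      = {y : FC n | ∃ s : (FC n)ˣ, aug n (↑s : FC n) = 1 ∧ starOne n (↑s : FC n) = ↑s ∧
          y = (↑s : FC n) * ↑s} ∧
    Nat.card {y : FC n //
        (∃ z : (FC n)ˣ, aug n (↑z : FC n) = 1 ∧ y = (↑z : FC n) * starOne n ↑z)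
          ∧ y ∈ sqSpan n}
      = 2 ^ (2 ^ (n - 2) - 1) := by
  have h1 := StarAux.lhs_subset_E n hn
  have h2 := StarAux.E_subset_rhs n hn
  have h3 := StarAux.rhs_subset_lhs n hn
  have hLE : {y : FC n | (∃ z : (FC n)ˣ, aug n (↑z : FC n) = 1 ∧ y = (↑z : FC n) * starOne n ↑z)
      ∧ y ∈ sqSpan n} = StarAux.Eset n :=
    Set.Subset.antisymm h1 (fun y hy => h3 (h2 hy))
  constructor
  · exact Set.Subset.antisymm (fun y hy => h2 (h1 hy)) h3
  · have hcong : Nat.card {y : FC n //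
        (∃ z : (FC n)ˣ, aug n (↑z : FC n) = 1 ∧ y = (↑z : FC n) * starOne n ↑z)
          ∧ y ∈ sqSpan n} = Nat.card (StarAux.Eset n) :=
      Nat.card_congr (Equiv.subtypeEquivRight (fun y => Set.ext_iff.mp hLE y))
    rw [hcong, StarAux.card_Eset n hn]

end
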